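/- Let K be a finite field of characteristic different from 2 and u a nonzero element of K with u ≠ 1 and u ≠ −1. (i) If u² + 4 is not a square in K, then the u-trinomial minimal solution over K is irreducible. (ii) If moreover u or −u is a generator of the cyclic group K^*, then the u-trinomial minimal solution over K is irreducible if and only if u² + 4 is not a square in K. -/

import Mathlib

set_option maxRecDepth 8000
set_option maxHeartbeats 1000000
set_option linter.unusedSectionVars false

namespace Quiddity

variable {A : Type*} [CommRing A]

/-- `mMat [a₁, …, aₙ]` is the matrix product `[[aₙ,-1],[1,0]] ⋯ [[a₁,-1],[1,0]]`. -/
def mMat : List A → Matrix (Fin 2) (Fin 2) A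
  | [] => 1
  | a :: t => mMat t * !![a, -1; 1, 0]

/-- Continuant: `cont [] = K₀ = 1`, `cont [a] = K₁(a) = a`, and the continuant recursion. -/
def cont : List A → A
  | [] => 1
  | [a] => a
  | a :: b :: t => a * cont (b :: t) - cont t

/-- A λ-quiddity is a tuple with `Mₙ(a₁,…,aₙ) = ± Id`. -/
def IsQuiddity (l : List A) : Prop := mMat l = 1 ∨ mMat l = -1

/-- The sum `⊕` of two tuples (meaningful for tuples of length ≥ 2):
`(a₁,…,aₘ) ⊕ (b₁,…,b_l) = (a₁+b_l, a₂,…,a_{m−1}, aₘ+b₁, b₂,…,b_{l−1})`. -/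
def oplus (la lb : List A) : List A :=
  (la.headD 0 + lb.getLastD 0) ::
    (la.tail.dropLast ++ (la.getLastD 0 + lb.headD 0) :: lb.tail.dropLast)

/-- Two tuples are equivalent if one is a cyclic permutation of the other or of its
reversal. -/
def TupleEquiv (l l' : List A) : Prop :=
  List.IsRotated l l' ∨ List.IsRotated l.reverse l'

/-- A λ-quiddity `c` is reducible if `c ∼ a ⊕ b` with `b` a λ-quiddity and both of size ≥ 3. -/
def QuiddityReducible (c : List A) : Prop :=
  ∃ a b : List A, 3 ≤ a.length ∧ 3 ≤ b.length ∧ IsQuiddity b ∧ TupleEquiv c (oplus a b)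

/-- `(a, b, a, b, …, a, b)` with `k` repetitions of the pair `(a, b)` (size `2k`). -/
def dynList : ℕ → A → A → List A
  | 0, _, _ => []
  | k + 1, a, b => a :: b :: dynList k a b

/-- `(u, v, v, u, v, v, …, u, v, v)` with `k` repetitions of the block `(u, v, v)`
(size `3k`). -/
def triList : ℕ → A → A → List A
  | 0, _, _ => []
  | k + 1, a, b => a :: b :: b :: triList k a b

@[simp] lemma mMat_nil : mMat ([] : List A) = 1 := rfl
@[simp] lemma mMat_cons (a : A) (t : List A) : mMat (a :: t) = mMat t * !![a, -1; 1, 0] := rfl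

lemma mMat_det (l : List A) : (mMat l).det = 1 := by
  induction l with
  | nil => simp
  | cons a t ih => simp [Matrix.det_mul, ih, Matrix.det_fin_two_of]

lemma mMat_append (l₁ l₂ : List A) : mMat (l₁ ++ l₂) = mMat l₂ * mMat l₁ := by
  induction l₁ with
  | nil => simp
  | cons a t ih => simp [ih, Matrix.mul_assoc]

@[simp] lemma triList_length (m : ℕ) (a b : A) : (triList m a b).length = 3 * m := by
  induction m with
  | zero => rfl
  | succ n ih => simp [triList, ih]; ring

lemma triList_append (m n : ℕ) (a b : A) :
    triList m a b ++ triList n a b = triList (m + n) a b := by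
  induction m with
  | zero => simp [triList]
  | succ p ih => simp only [triList, List.cons_append, ih]; rw [Nat.add_right_comm]; rfl

lemma triList_succ (m : ℕ) (a b : A) : triList (m+1) a b = a :: b :: b :: triList m a b := rfl

lemma fin2_ext' {a b c d a' b' c' d' : A} (h1 : a = a') (h2 : b = b') (h3 : c = c')
    (h4 : d = d') : !![a,b;c,d] = !![a',b';c',d'] := by rw [h1,h2,h3,h4]

lemma transpose_fin2 (a b c d : A) : (!![a,b;c,d]).transpose = !![a,c;b,d] := by
  ext i j; fin_cases i <;> fin_cases j <;> simp

def upad (u v : A) : ℕ → List A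
  | 0 => []
  | 1 => [u]
  | _ + 2 => [u, v]

lemma take_triList (u v : A) : ∀ (M j : ℕ), j ≤ 3*M →
    (triList M u v).take j = triList (j/3) u v ++ upad u v (j%3) := by
  intro M
  induction M with
  | zero => intro j hj; interval_cases j; simp [triList, upad]
  | succ n ih =>
    intro j hj
    match j with
    | 0 => simp [triList, upad]
    | 1 => simp [triList, upad]
    | 2 => simp [triList, upad]
    | (j+3) =>
      have h3 : (j+3)/3 = j/3 + 1 := by omega
      have h4 : (j+3)%3 = j%3 := by omega
      show (triList (n+1) u v).take (j+3) = _
      rw [h3, h4, triList, List.take_succ_cons, List.take_succ_cons, List.take_succ_cons,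
        ih j (by omega)]
      show _ = (u :: v :: v :: triList (j/3) u v) ++ _
      simp

lemma drop_triList (u v : A) : ∀ (M s : ℕ), ∃ a N, a ≤ 2 ∧
    (triList M u v).drop s = List.replicate a v ++ triList N u v := by
  intro M
  induction M with
  | zero => intro s; exact ⟨0, 0, by omega, by simp [triList]⟩
  | succ n ih =>
    intro s
    match s with
    | 0 => exact ⟨0, n+1, by omega, by simp⟩
    | 1 => exact ⟨2, n, by omega, by simp [triList, List.replicate]⟩
    | 2 => exact ⟨1, n, by omega, by simp [triList, List.replicate]⟩
    | (s+3) =>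
      obtain ⟨a, N, ha, h⟩ := ih s
      exact ⟨a, N, ha, by simpa [triList] using h⟩

lemma infix_classify {u v : A} {f : List A} {N : ℕ} (h : f <:+: triList N u v) :
    ∃ a m r, a ≤ 2 ∧ r ≤ 2 ∧ f.length = a + 3*m + r ∧
      f = List.replicate a v ++ (triList m u v ++ upad u v r) := by
  obtain ⟨s, t, hst⟩ := h
  have hpre : f <+: (triList N u v).drop s.length := by
    rw [List.append_assoc] at hst
    rw [← hst, List.drop_left]
    exact ⟨t, rfl⟩
  obtain ⟨a, M, ha, hdrop⟩ := drop_triList u v N s.length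
  rw [hdrop] at hpre
  have hfl := hpre.length_le
  simp at hfl
  have hf : f = (List.replicate a v ++ triList M u v).take f.length :=
    List.prefix_iff_eq_take.mp hpre
  rw [List.take_append, List.take_replicate, List.length_replicate] at hf
  by_cases hl : f.length ≤ a
  · refine ⟨f.length, 0, 0, by omega, by omega, by simp, ?_⟩
    rw [hf]
    have : f.length - a = 0 := by omega
    simp [this, min_eq_left hl, triList, upad]
  · push_neg at hl
    have hmin : min f.length a = a := by omega
    have hle : f.length - a ≤ 3 * M := by omega
    rw [hmin, take_triList u v M _ hle] at hf
    refine ⟨a, (f.length - a)/3, (f.length - a)%3, ha, by omega, by omega, hf⟩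

lemma suffix_rotate_infix {l f : List A} {n : ℕ} (h : f <:+ l.rotate n) :
    f <:+: (l ++ l) := by
  rcases eq_or_ne l [] with rfl | hl
  · rw [List.rotate_nil] at h
    rw [List.suffix_nil.mp h]; exact List.nil_infix
  · set n' := n % l.length with hn'
    have hlt : n' < l.length := Nat.mod_lt _ (List.length_pos_iff.mpr hl)
    have hrot : l.rotate n = l.drop n' ++ l.take n' := by
      rw [← List.rotate_mod, List.rotate_eq_drop_append_take hlt.le]
    obtain ⟨p, hp⟩ := h
    refine ⟨l.take n' ++ p, l.drop n', ?_⟩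
    conv_rhs => rw [← List.take_append_drop n' l]
    rw [List.append_assoc (l.take n') p f, hp, hrot]
    simp only [List.append_assoc]

lemma mMat_reverse (l : List A) :
    mMat l.reverse = !![1,0;0,-1] * (mMat l).transpose * !![1,0;0,-1] := by
  induction l with
  | nil =>
    simp only [List.reverse_nil, mMat_nil, Matrix.transpose_one, Matrix.mul_one]
    rw [Matrix.one_fin_two, Matrix.mul_fin_two]
    norm_num
  | cons a t ih =>
    rw [List.reverse_cons, mMat_append, ih]
    simp only [mMat_cons, mMat_nil, Matrix.one_mul]
    rw [Matrix.transpose_mul, Matrix.eta_fin_two (mMat t)]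
    simp only [transpose_fin2]
    rw [Matrix.mul_fin_two, Matrix.mul_fin_two, Matrix.mul_fin_two, Matrix.mul_fin_two,
      Matrix.mul_fin_two, Matrix.mul_fin_two]
    apply fin2_ext' <;> ring

lemma mMat_reverse_00 (l : List A) : mMat l.reverse 0 0 = mMat l 0 0 := by
  rw [mMat_reverse, Matrix.eta_fin_two (mMat l)]
  simp only [transpose_fin2]
  rw [Matrix.mul_fin_two, Matrix.mul_fin_two]
  norm_num

end Quiddity

open Quiddity

section Field

variable {K : Type*} [Field K]

lemma fin2_ext {a b c d a' b' c' d' : K} (h1 : a = a') (h2 : b = b') (h3 : c = c')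
    (h4 : d = d') : !![a,b;c,d] = !![a',b';c',d'] := by rw [h1,h2,h3,h4]

lemma neg_one_fin_two : (-1 : Matrix (Fin 2) (Fin 2) K) = !![-1,0;0,-1] := by
  ext i j
  fin_cases i <;> fin_cases j <;> simp [Matrix.one_fin_two]

noncomputable def cm (u : K) (m : ℕ) : K := u⁻¹ * ((-u⁻¹)^m - (-u)^m)

lemma mMat_triList (u : K) (hu0 : u ≠ 0) (m : ℕ) :
    mMat (triList m u u⁻¹) = !![(-u)^m, cm u m; 0, (-u⁻¹)^m] := by
  induction m with
  | zero =>
    show (1 : Matrix (Fin 2) (Fin 2) K) = _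
    rw [Matrix.one_fin_two]
    apply fin2_ext <;> simp [cm]
  | succ n ih =>
    show ((mMat (triList n u u⁻¹) * !![(u⁻¹ : K), -1; 1, 0]) * !![(u⁻¹ : K), -1; 1, 0]) * !![u, -1; 1, 0] = _
    rw [ih, Matrix.mul_fin_two, Matrix.mul_fin_two, Matrix.mul_fin_two]
    have hv : u * u⁻¹ = 1 := mul_inv_cancel₀ hu0
    apply fin2_ext
    · simp only [cm, pow_succ]; linear_combination (u⁻¹*(-u⁻¹)^n) * hv
    · simp only [cm, pow_succ]; linear_combination (-(-u)^n) * hv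
    · linear_combination (-u⁻¹)^n * hv
    · simp only [pow_succ]; ring

lemma quiddity_triList_iff (u : K) (hu0 : u ≠ 0) (j : ℕ) :
    IsQuiddity (triList j u u⁻¹) ↔ (u^2)^j = 1 := by
  rw [IsQuiddity, mMat_triList u hu0]
  constructor
  · rintro (h | h)
    · have h00 : (-u)^j = 1 := by have := Matrix.ext_iff.mpr h 0 0; simpa using this
      calc (u^2)^j = ((-u)^2)^j := by rw [neg_sq]
        _ = ((-u)^j)^2 := by rw [← pow_mul, ← pow_mul, Nat.mul_comm]
        _ = 1 := by rw [h00]; ring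
    · have h00 : (-u)^j = -1 := by
        have := Matrix.ext_iff.mpr h 0 0
        simpa [neg_one_fin_two] using this
      calc (u^2)^j = ((-u)^2)^j := by rw [neg_sq]
        _ = ((-u)^j)^2 := by rw [← pow_mul, ← pow_mul, Nat.mul_comm]
        _ = 1 := by rw [h00]; ring
  · intro h
    have hself : u^j * u^j = 1 := by
      rw [← pow_add, ← two_mul, pow_mul] at *; exact h
    have hη := mul_self_eq_one_iff.mp hself
    have hinvj : (u⁻¹)^j = u^j := by
      rw [inv_pow]; rcases hη with h1 | h1 <;> rw [h1] <;> norm_num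
    have hcm : cm u j = 0 := by
      rcases Nat.even_or_odd j with hj | hj
      · simp [cm, hj.neg_pow, hinvj]
      · simp [cm, hj.neg_pow, hinvj]
    rcases Nat.even_or_odd j with hj | hj
    · rw [hcm, hj.neg_pow, hj.neg_pow, hinvj]
      rcases hη with h1 | h1 <;> rw [h1]
      · left; exact Matrix.one_fin_two.symm
      · right; exact neg_one_fin_two.symm
    · rw [hcm, hj.neg_pow, hj.neg_pow, hinvj]
      rcases hη with h1 | h1 <;> rw [h1]
      · right; rw [neg_one_fin_two]
      · left; rw [Matrix.one_fin_two]; norm_num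

lemma sandwich {b₁ bl : K} {inner : List K} (h : IsQuiddity (b₁ :: (inner ++ [bl]))) :
    mMat inner 0 0 = 1 ∨ mMat inner 0 0 = -1 := by
  have hm : mMat (b₁ :: (inner ++ [bl]))
      = ((1 * !![bl,-1;1,0]) * mMat inner) * !![b₁,-1;1,0] := by
    rw [mMat_cons, mMat_append]; rfl
  rcases h with h | h <;> rw [hm] at h <;>
    rw [Matrix.one_mul, Matrix.eta_fin_two (mMat inner)] at h <;>
    rw [Matrix.mul_fin_two, Matrix.mul_fin_two] at h
  · right
    have := Matrix.ext_iff.mpr h 1 1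
    simp at this
    linear_combination -this
  · left
    have := Matrix.ext_iff.mpr h 1 1
    simp [neg_one_fin_two] at this
    linear_combination this

lemma main_fwd (u : K) (hu0 : u ≠ 0) (k : ℕ)
    (H1 : ∀ n, 1 ≤ n → n ≤ k - 1 → (u^2)^n ≠ 1)
    (hsq : ¬ IsSquare (u^2 + 4)) : ¬ QuiddityReducible (triList k u u⁻¹) := by
  rintro ⟨a, b, ha, hb, hbq, heq⟩
  have hv : u * u⁻¹ = 1 := mul_inv_cancel₀ hu0
  have hlen_op : (oplus a b).length = a.length - 2 + (b.length - 2) + 2 := by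
    simp [oplus]
    omega
  have hlen_eq : 3*k = a.length - 2 + (b.length - 2) + 2 := by
    rcases heq with h | h
    · have h2 := h.perm.length_eq
      rw [hlen_op] at h2
      simpa using h2
    · have h2 := h.perm.length_eq
      rw [hlen_op] at h2
      simpa using h2
  obtain ⟨b₁, t, rfl⟩ : ∃ x t', b = x :: t' := by
    cases b with
    | nil => simp at hb
    | cons x t => exact ⟨x, t, rfl⟩
  have htne : t ≠ [] := by
    intro h; subst h; simp at hb
  have hbq' : IsQuiddity (b₁ :: (t.dropLast ++ [t.getLast htne])) := by
    rwa [List.dropLast_append_getLast]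
  set inner := t.dropLast with hinner
  have hM := sandwich hbq'
  have hsuf : inner <:+ oplus a (b₁ :: t) := by
    refine ⟨(a.headD 0 + (b₁::t).getLastD 0) :: (a.tail.dropLast ++ [a.getLastD 0 + b₁]), ?_⟩
    simp [oplus, List.append_assoc]
    exact hinner
  have h2k : triList k u u⁻¹ ++ triList k u u⁻¹ = triList (2*k) u u⁻¹ := by
    rw [triList_append, two_mul]
  obtain ⟨g, hginf, hglen, hg00⟩ : ∃ g, g <:+: triList (2*k) u u⁻¹ ∧
      g.length = inner.length ∧ mMat g 0 0 = mMat inner 0 0 := by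
    rcases heq with ⟨n, hrot⟩ | ⟨n, hrot⟩
    · refine ⟨inner, ?_, rfl, rfl⟩
      rw [← h2k]
      exact suffix_rotate_infix (hrot ▸ hsuf)
    · refine ⟨inner.reverse, ?_, by simp, mMat_reverse_00 inner⟩
      have h3 : inner <:+: ((triList k u u⁻¹).reverse ++ (triList k u u⁻¹).reverse) :=
        suffix_rotate_infix (hrot ▸ hsuf)
      rw [← List.reverse_append, h2k] at h3
      have h4 := List.reverse_infix.mpr h3
      rwa [List.reverse_reverse] at h4
  have hinlen : inner.length = t.length - 1 := by simp [hinner]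
  have htlen : 2 ≤ t.length := by
    have := hb; simp at this; omega
  have halen : 3 ≤ a.length := ha
  have hbound1 : 1 ≤ g.length := by
    rw [hglen, hinlen]; omega
  have hbound2 : g.length + 3 ≤ 3*k := by
    rw [hglen, hinlen]
    simp only [List.length_cons] at hlen_eq
    omega
  obtain ⟨a', m, r, ha', hr', hglen2, hgf⟩ := infix_classify hginf
  obtain ⟨d, hd00, hd1⟩ : ∃ d, mMat g 0 0 = d ∧ ((d:K) = 1 ∨ d = -1) := by
    rcases hM with h | h
    · exact ⟨1, by rw [hg00, h], Or.inl rfl⟩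
    · exact ⟨-1, by rw [hg00, h], Or.inr rfl⟩
  have hd2 : d*d = 1 := by rcases hd1 with h | h <;> rw [h] <;> norm_num
  have hd0 : d ≠ 0 := by
    rcases hd1 with h | h <;> rw [h] <;> norm_num
  clear hg00 hM hbq hbq' hsuf hginf heq hlen_op hlen_eq
  rw [hgf] at hd00
  rw [mMat_append, mMat_append, mMat_triList u hu0] at hd00
  have hαβ : (-u)^m * (-u⁻¹)^m = 1 := by
    rw [← mul_pow, show ((-u) * -u⁻¹ : K) = u * u⁻¹ by ring, hv, one_pow]
  have hα2 : (u^2)^m = (-u)^m * (-u)^m := by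
    rw [show (u:K)^2 = (-u)*(-u) by ring, mul_pow]
  interval_cases a' <;> interval_cases r <;>
    simp only [upad, List.replicate, mMat_cons, mMat_nil, Matrix.one_mul, Matrix.mul_one,
      List.nil_append, List.append_nil, Matrix.mul_fin_two, cm,
      Matrix.cons_val', Matrix.cons_val_zero, Matrix.cons_val_one, Matrix.head_cons,
      Matrix.empty_val', Matrix.cons_val_fin_one, Matrix.head_fin_const,
      Matrix.of_apply] at hd00
  · -- a'=0 r=0
    refine H1 m (by omega) (by omega) ?_
    rw [hα2]
    linear_combination ((-u)^m + d)*hd00 + hd2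
  · -- a'=0 r=1
    refine H1 (m+1) (by omega) (by omega) ?_
    rw [pow_succ, hα2]
    linear_combination (u*(-u)^m + d)*hd00 + hd2
  · -- a'=0 r=2
    exact hd0 (by linear_combination ((-u)^m)*hv - hd00)
  · -- a'=1 r=0
    have h3 : (u*(-u)^m)*d = 1 := by
      linear_combination (-(u*(-u)^m))*hd00 + ((-u)^m*(-u⁻¹)^m)*hv + hαβ
    refine H1 (m+1) (by omega) (by omega) ?_
    rw [pow_succ, hα2]
    linear_combination (u*(-u)^m*d + 1)*h3 - (u*(-u)^m)*(u*(-u)^m)*hd2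
  · -- a'=1 r=1
    exact hd0 (by linear_combination ((-u⁻¹)^m)*hv - hd00)
  · -- a'=1 r=2
    have h3 : u⁻¹*(-u⁻¹)^m = -d := by
      linear_combination ((-u)^m*u⁻¹ + u⁻¹*((-u⁻¹)^m - (-u)^m))*hv - hd00
    have h4 : (u*(-u)^m) * (u⁻¹*(-u⁻¹)^m) = 1 := by
      linear_combination ((-u)^m*(-u⁻¹)^m)*hv + hαβ
    rw [h3] at h4
    refine H1 (m+1) (by omega) (by omega) ?_
    rw [pow_succ, hα2]
    linear_combination (1 - u*(-u)^m*d)*h4 - (u*(-u)^m)*(u*(-u)^m)*hd2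
  · -- a'=2 r=0
    have h1 : u⁻¹*(-u⁻¹)^m - u*(-u)^m = d*u := by
      linear_combination u*hd00 - (u⁻¹*(-u⁻¹)^m)*hv
    exact hsq ⟨u⁻¹*(-u⁻¹)^m + u*(-u)^m, by
      linear_combination (-(u⁻¹*(-u⁻¹)^m - u*(-u)^m + d*u))*h1 - u^2*hd2
        - (4*((-u)^m*(-u⁻¹)^m))*hv - 4*hαβ⟩
  · -- a'=2 r=1
    have h3 : u*(-u)^m = -d := by
      linear_combination (u⁻¹*(-u⁻¹)^m)*hv - hd00
    refine H1 (m+1) (by omega) (by omega) ?_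
    rw [pow_succ, hα2]
    linear_combination (u*(-u)^m - d)*h3 + hd2
  · -- a'=2 r=2
    have h1 : u⁻¹*u⁻¹*(-u⁻¹)^m = -d := by
      linear_combination ((-u)^m*(u⁻¹*u⁻¹ - 1) + (u⁻¹*((-u⁻¹)^m - (-u)^m))*u⁻¹)*hv - hd00
    have h4 : (u^2*(-u)^m) * (u⁻¹*u⁻¹*(-u⁻¹)^m) = 1 := by
      linear_combination ((-u)^m*(-u⁻¹)^m*(u*u⁻¹+1))*hv + hαβ
    rw [h1] at h4
    refine H1 (m+2) (by omega) (by omega) ?_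
    rw [pow_succ, pow_succ, hα2]
    linear_combination (1 - u^2*(-u)^m*d)*h4 - (u^2*(-u)^m)*(u^2*(-u)^m)*hd2

lemma build_quiddity {inner : List K} {p q r s : K} (hM : mMat inner = !![p,q;r,s])
    (hdet : p*s - q*r = 1) (hp : p = 1 ∨ p = -1) :
    IsQuiddity ((-(p*q)) :: (inner ++ [p*r])) := by
  have hmm : mMat ((-(p*q)) :: (inner ++ [p*r]))
      = ((1 * !![p*r,-1;1,0]) * !![p,q;r,s]) * !![-(p*q),-1;1,0] := by
    rw [mMat_cons, mMat_append, hM]; rfl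
  rcases hp with hp | hp <;> subst hp
  · right
    rw [hmm, Matrix.one_mul, Matrix.mul_fin_two, Matrix.mul_fin_two, neg_one_fin_two]
    apply fin2_ext
    · linear_combination -hdet
    · ring
    · ring
    · ring
  · left
    rw [hmm, Matrix.one_mul, Matrix.mul_fin_two, Matrix.mul_fin_two, Matrix.one_fin_two]
    apply fin2_ext
    · linear_combination hdet
    · ring
    · ring
    · ring

lemma main_bwd (u : K) (hu0 : u ≠ 0) (k n : ℕ) (hn1 : 1 ≤ n) (hnk : n + 1 ≤ k)
    (ε : K) (hε : ε = 1 ∨ ε = -1)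
    (hteq : (u⁻¹^n)^2 + ε*u*(u⁻¹^n) - 1 = 0) :
    QuiddityReducible (triList k u u⁻¹) := by
  have hv : u * u⁻¹ = 1 := mul_inv_cancel₀ hu0
  obtain ⟨m, rfl⟩ : ∃ m, n = m + 1 := ⟨n - 1, by omega⟩
  obtain ⟨r', hk'⟩ : ∃ r', k = m + 2 + r' := ⟨k - m - 2, by omega⟩
  set p0 : K := u⁻¹*u⁻¹*(-u⁻¹)^m - (-u)^m with hp0def
  set q0 : K := -((-u)^m*u⁻¹ + u⁻¹*((-u⁻¹)^m - (-u)^m)) with hq0def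
  set r0 : K := u⁻¹*(-u⁻¹)^m with hr0def
  set s0 : K := -(-u⁻¹)^m with hs0def
  have hMi : mMat (u⁻¹ :: u⁻¹ :: triList m u u⁻¹) = !![p0,q0;r0,s0] := by
    rw [mMat_cons, mMat_cons, mMat_triList u hu0, Matrix.mul_fin_two, Matrix.mul_fin_two]
    apply fin2_ext <;> (simp only [cm, hp0def, hq0def, hr0def, hs0def]; ring)
  have hdet : p0*s0 - q0*r0 = 1 := by
    have h := mMat_det (u⁻¹ :: u⁻¹ :: triList m u u⁻¹)
    rw [hMi, Matrix.det_fin_two_of] at h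
    exact h
  -- p0 = ±1
  have hXY : u^m * u⁻¹^m = 1 := by rw [← mul_pow, hv, one_pow]
  have hαs : (-u)^m = (-1)^m * u^m := neg_pow u m
  have hβs : (-u⁻¹)^m = (-1)^m * u⁻¹^m := neg_pow u⁻¹ m
  have hs2 : ((-1:K))^m * (-1)^m = 1 := by
    rw [← pow_add]
    exact Even.neg_one_pow ⟨m, rfl⟩
  have ht0 : u⁻¹^(m+1) ≠ 0 := pow_ne_zero _ (inv_ne_zero hu0)
  have hTs : u⁻¹^(m+1) = u⁻¹^m * u⁻¹ := pow_succ u⁻¹ m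
  have key : p0 * (u⁻¹^(m+1)) = (-ε*(-1)^m) * (u⁻¹^(m+1)) := by
    rw [hp0def, hαs, hβs, hTs]
    rw [hTs] at hteq
    linear_combination ((-1:K)^m*u⁻¹)*hteq - ((-1:K)^m*u⁻¹)*hXY
      - (ε*(-1:K)^m*(u⁻¹^m)*u⁻¹)*hv
  have hp0val : p0 = -ε*(-1)^m := mul_right_cancel₀ ht0 key
  have hp0 : p0 = 1 ∨ p0 = -1 := by
    rcases Nat.even_or_odd m with hm | hm <;> rcases hε with he | he <;>
      rw [hp0val, he] <;> [skip; skip; skip; skip] <;>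
      first
        | (rw [hm.neg_one_pow]; norm_num)
        | (rw [hm.neg_one_pow]; norm_num)
  -- build
  refine ⟨(u - p0*r0) :: u⁻¹ :: u⁻¹ :: (triList r' u u⁻¹ ++ [u - (-(p0*q0))]),
    (-(p0*q0)) :: ((u⁻¹ :: u⁻¹ :: triList m u u⁻¹) ++ [p0*r0]), ?_, ?_, ?_, ?_⟩
  · simp
  · simp
  · exact build_quiddity hMi hdet hp0
  · have heq : oplus ((u - p0*r0) :: u⁻¹ :: u⁻¹ :: (triList r' u u⁻¹ ++ [u - (-(p0*q0))]))
        ((-(p0*q0)) :: ((u⁻¹ :: u⁻¹ :: triList m u u⁻¹) ++ [p0*r0]))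
        = triList k u u⁻¹ := by
      rw [oplus]
      rw [show ((-(p0*q0)) :: ((u⁻¹ :: u⁻¹ :: triList m u u⁻¹) ++ [p0*r0])).getLastD 0
            = p0*r0 by rw [List.getLastD_cons, List.getLastD_concat]]
      rw [show ((u - p0*r0) :: u⁻¹ :: u⁻¹ :: (triList r' u u⁻¹ ++ [u - (-(p0*q0))])).getLastD 0
            = u - (-(p0*q0)) by
          rw [List.getLastD_cons, List.getLastD_cons, List.getLastD_cons, List.getLastD_concat]]
      rw [show ((u - p0*r0) :: u⁻¹ :: u⁻¹ :: (triList r' u u⁻¹ ++ [u - (-(p0*q0))])).tail.dropLast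
            = u⁻¹ :: u⁻¹ :: triList r' u u⁻¹ by
          show (u⁻¹ :: u⁻¹ :: (triList r' u u⁻¹ ++ [u - (-(p0*q0))])).dropLast = _
          rw [show (u⁻¹ :: u⁻¹ :: (triList r' u u⁻¹ ++ [u - (-(p0*q0))]))
              = (u⁻¹ :: u⁻¹ :: triList r' u u⁻¹) ++ [u - (-(p0*q0))] by simp,
            List.dropLast_concat]]
      rw [show ((-(p0*q0)) :: ((u⁻¹ :: u⁻¹ :: triList m u u⁻¹) ++ [p0*r0])).tail.dropLast
            = u⁻¹ :: u⁻¹ :: triList m u u⁻¹ by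
          show ((u⁻¹ :: u⁻¹ :: triList m u u⁻¹) ++ [p0*r0]).dropLast = _
          rw [List.dropLast_concat]]
      simp only [List.headD_cons]
      rw [show u - p0*r0 + p0*r0 = u by ring, show u - (-(p0*q0)) + (-(p0*q0)) = u by ring]
      rw [hk', show m + 2 + r' = (r' + 1) + (m + 1) by ring, ← triList_append]
      rfl
    rw [heq]
    exact Or.inl (List.IsRotated.refl _)

lemma exists_param {K : Type*} [Field K] [Fintype K] (hchar : ringChar K ≠ 2)
    (u : K) (hu0 : u ≠ 0) (k : ℕ) (hk : 0 < k)
    (hku : (u^2)^k = 1) (hmink : ∀ j, 1 ≤ j → j < k → (u^2)^j ≠ 1)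
    (hgen : ∃ w : Kˣ, ((w : K) = u ∨ (w : K) = -u) ∧ ∀ x : Kˣ, x ∈ Subgroup.zpowers w)
    (hsq : IsSquare (u^2+4)) :
    ∃ n ε, 1 ≤ n ∧ n + 1 ≤ k ∧ ((ε : K) = 1 ∨ ε = -1) ∧
      (u⁻¹^n)^2 + ε*u*(u⁻¹^n) - 1 = 0 := by
  letI := Classical.decEq K
  obtain ⟨w, hw, hwg⟩ := hgen
  have h2 : (2:K) ≠ 0 := Ring.two_ne_zero hchar
  obtain ⟨y, hy⟩ := hsq
  set t : K := (y - u)/2 with htdef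
  have hteq : t*t + u*t - 1 = 0 := by
    rw [htdef]
    field_simp
    linear_combination -hy
  have ht0 : t ≠ 0 := by
    intro h; rw [h] at hteq; simp at hteq
  set U : Kˣ := Units.mk0 u hu0 with hUdef
  have hcard : orderOf w = Fintype.card Kˣ := by
    have := orderOf_eq_card_of_forall_mem_zpowers hwg
    rwa [Nat.card_eq_fintype_card] at this
  have hw2 : (w^2 : Kˣ) = U^2 := by
    apply Units.ext
    rw [Units.val_pow_eq_pow_val, Units.val_pow_eq_pow_val]
    rcases hw with h | h <;> rw [h] <;> [rfl; skip]
    show (-u)^2 = (Units.mk0 u hu0 : K)^2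
    show (-u)^2 = u^2
    ring
  have hordw2 : orderOf (w^2) = k := by
    rw [hw2, orderOf_eq_iff hk]
    constructor
    · apply Units.ext
      rw [← pow_mul, Units.val_pow_eq_pow_val]
      show ((U:K))^(2*k) = 1
      rw [pow_mul]
      exact hku
    · intro j hj hj0 hcon
      apply hmink j hj0 hj
      have := congrArg Units.val hcon
      rw [← pow_mul, Units.val_pow_eq_pow_val] at this
      rw [show ((U:K)) = u from rfl] at this
      rw [← pow_mul]
      exact this
  have hdvd : 2 ∣ Fintype.card Kˣ := by
    have hne : ((-1 : Kˣ)) ≠ 1 := by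
      intro h
      have := congrArg Units.val h
      rw [Units.val_neg, Units.val_one] at this
      exact Ring.neg_one_ne_one_of_char_ne_two hchar this
    have ho2 : orderOf (-1 : Kˣ) = 2 := orderOf_eq_prime (by simp) hne
    rw [← ho2]; exact orderOf_dvd_card
  have hcard2k : Fintype.card Kˣ = 2*k := by
    have hpow := orderOf_pow (n := 2) w
    rw [hordw2, hcard] at hpow
    obtain ⟨c, hc⟩ := hdvd
    have hgcd : Nat.gcd (Fintype.card Kˣ) 2 = 2 := by
      rw [hc]
      have := Nat.gcd_mul_left 2 c 1
      simpa using this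
    rw [hgcd, hc] at hpow
    omega
  have hwk : w^k = -1 := by
    have h1 : (w^k)^2 = 1 := by
      rw [← pow_mul, show k*2 = 2*k by ring, ← hcard2k, ← hcard]
      exact pow_orderOf_eq_one w
    have h2' : w^k ≠ 1 := by
      intro h
      have := orderOf_dvd_of_pow_eq_one h
      rw [hcard, hcard2k] at this
      have := Nat.le_of_dvd hk this
      omega
    have hcoe : ((w^k : Kˣ) : K) * ((w^k : Kˣ) : K) = 1 := by
      have := congrArg Units.val h1
      rw [Units.val_pow_eq_pow_val, Units.val_one] at this
      rw [← this]; ring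
    rcases mul_self_eq_one_iff.mp hcoe with h | h
    · exact absurd (Units.ext (by simpa using h)) h2'
    · apply Units.ext
      rw [Units.val_neg, Units.val_one]
      exact h
  set T : Kˣ := Units.mk0 t ht0 with hTdef
  obtain ⟨n₀, hn₀⟩ : ∃ n₀ : ℕ, w ^ n₀ = T := by
    have h3 := hwg T
    rw [← mem_powers_iff_mem_zpowers] at h3
    exact (Submonoid.mem_powers_iff T w).mp h3
  set r0 := n₀ % (2*k) with hr0def
  have hr0 : w ^ r0 = T := by
    rw [← hn₀, hr0def, show 2*k = orderOf w by rw [hcard, hcard2k]]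
    exact pow_mod_orderOf w n₀
  have hr0pos : 0 < r0 := by
    rcases Nat.eq_zero_or_pos r0 with h | h
    · exfalso
      rw [h, pow_zero] at hr0
      have ht1 : (1:K) = t := by
        have := congrArg Units.val hr0
        simpa [hTdef] using this
      apply hu0
      linear_combination hteq + (1 + u + t)*ht1
    · exact h
  have hr0lt : r0 < 2*k := Nat.mod_lt _ (by omega)
  have hρ : w ^ (2*k - r0) = T⁻¹ := by
    have h4 : w ^ (2*k - r0) * w ^ r0 = 1 := by
      rw [← pow_add, show 2*k - r0 + r0 = 2*k by omega,
        show 2*k = orderOf w by rw [hcard, hcard2k]]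
      exact pow_orderOf_eq_one w
    rw [hr0] at h4
    exact eq_inv_of_mul_eq_one_left h4
  have hne_k : 2*k - r0 ≠ k := by
    intro h
    rw [h, hwk] at hρ
    have hTneg : t = -1 := by
      have h5 : T = -1 := by rw [← inv_inv T, ← hρ]; simp
      have := congrArg Units.val h5
      rw [Units.val_neg, Units.val_one] at this
      exact this
    apply hu0
    rw [hTneg] at hteq
    linear_combination -hteq
  obtain ⟨n, hn1, hnk, hwn⟩ : ∃ n, 1 ≤ n ∧ n + 1 ≤ k ∧
      ((w^n : Kˣ) = T⁻¹ ∨ (w^n : Kˣ) = -T⁻¹) := by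
    rcases lt_trichotomy (2*k - r0) k with h | h | h
    · exact ⟨2*k - r0, by omega, by omega, Or.inl hρ⟩
    · exact absurd h hne_k
    · refine ⟨2*k - r0 - k, by omega, by omega, Or.inr ?_⟩
      have h6 : w^(2*k - r0 - k) * w^k = w^(2*k - r0) := by
        rw [← pow_add]; congr 1; omega
      rw [hwk, hρ] at h6
      have h7 := eq_mul_inv_of_mul_eq h6
      have h8 : ((-1 : Kˣ))⁻¹ = -1 := by simp
      rw [h7, h8, mul_neg_one]
  -- now convert to K-level
  have hvalT : ((T : Kˣ) : K) = t := rfl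
  have hwnval : ((w^n : Kˣ) : K) = t⁻¹ ∨ ((w^n : Kˣ) : K) = -t⁻¹ := by
    rcases hwn with h | h <;> rw [h]
    · left; rw [Units.val_inv_eq_inv_val, hvalT]
    · right; rw [Units.val_neg, Units.val_inv_eq_inv_val, hvalT]
  have hwpow : ((w^n : Kˣ) : K) = ((w : Kˣ) : K)^n := Units.val_pow_eq_pow_val w n
  obtain ⟨η, hη1, hηeq⟩ : ∃ η : K, (η = 1 ∨ η = -1) ∧ u⁻¹^n = η * t := by
    rcases hw with hwu | hwu
    · have hbase : u⁻¹^n = (((w^n : Kˣ) : K))⁻¹ := by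
        rw [hwpow, hwu, ← inv_pow]
      rcases hwnval with h | h <;> rw [h] at hbase
      · exact ⟨1, Or.inl rfl, by rw [hbase, inv_inv, one_mul]⟩
      · exact ⟨-1, Or.inr rfl, by rw [hbase]; rw [← inv_neg, inv_inv]; ring⟩
    · have hx : u⁻¹ = -(((w : Kˣ) : K))⁻¹ := by
        rw [hwu, inv_neg, neg_neg]
      have hbase : u⁻¹^n = (-1)^n * (((w^n : Kˣ) : K))⁻¹ := by
        rw [hwpow, hx, ← inv_pow]
        rw [show (-(((w : Kˣ) : K))⁻¹)^n = ((-1) * ((w : Kˣ) : K)⁻¹)^n by ring_nf,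
          mul_pow]
      rcases hwnval with h | h <;> rw [h] at hbase
      · refine ⟨(-1)^n, ?_, by rw [hbase, inv_inv]⟩
        rcases Nat.even_or_odd n with hn | hn
        · left; exact hn.neg_one_pow
        · right; exact hn.neg_one_pow
      · refine ⟨-(-1)^n, ?_, by rw [hbase, ← inv_neg, inv_inv]; ring⟩
        rcases Nat.even_or_odd n with hn | hn
        · right; rw [hn.neg_one_pow]
        · left; rw [hn.neg_one_pow]; ring
  refine ⟨n, η, hn1, hnk, hη1, ?_⟩
  rw [hηeq]
  rcases hη1 with h | h <;> rw [h] <;> linear_combination hteq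

end Field

/-- over a finite field of characteristic ≠ 2, if `u² + 4` is not a square
then the `u`-trinomial minimal solution is irreducible; and if `u` or `−u` generates `K*`,
this is an equivalence. -/
theorem stmt15 (K : Type*) [Field K] [Fintype K] (hchar : ringChar K ≠ 2)
    (u : K) (hu0 : u ≠ 0) (hu1 : u ≠ 1) (hu2 : u ≠ -1)
    (k : ℕ) (hk : 0 < k)
    (hq : IsQuiddity (triList k u u⁻¹))
    (hmin : ∀ j, 0 < j → IsQuiddity (triList j u u⁻¹) → k ≤ j) :
    (¬ IsSquare (u ^ 2 + 4) → ¬ QuiddityReducible (triList k u u⁻¹)) ∧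
    ((∃ w : Kˣ, ((w : K) = u ∨ (w : K) = -u) ∧ ∀ v : Kˣ, v ∈ Subgroup.zpowers w) →
      (¬ QuiddityReducible (triList k u u⁻¹) ↔ ¬ IsSquare (u ^ 2 + 4))) := by
  have hku : (u^2)^k = 1 := (quiddity_triList_iff u hu0 k).mp hq
  have H1 : ∀ n, 1 ≤ n → n ≤ k - 1 → (u^2)^n ≠ 1 := by
    intro n h1 h2 hcon
    have := hmin n (by omega) ((quiddity_triList_iff u hu0 n).mpr hcon)
    omega
  have hmink : ∀ j, 1 ≤ j → j < k → (u^2)^j ≠ 1 := by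
    intro j h1 h2
    exact H1 j h1 (by omega)
  constructor
  · intro hs
    exact main_fwd u hu0 k H1 hs
  · intro hgen
    constructor
    · intro hnred hsq
      obtain ⟨n, ε, hn1, hnk, hε, heq⟩ :=
        exists_param hchar u hu0 k hk hku hmink hgen hsq
      exact hnred (main_bwd u hu0 k n hn1 hnk ε hε heq)
    · intro hs
      exact main_fwd u hu0 k H1 hs
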